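/- Let a > 0, c > 0, β ≥ 0, and let z_+ > z_− ≥ 0 be real numbers with z_+ + z_− = b/a and z_+ z_− = c/a for some b (i.e., z_± are the roots of a z² − b z + c). Define q_0 := 1/c and q_i := (1/(a(z_+ − z_−))) · ((a/c)^{i+1}(z_+^{i+1} − z_−^{i+1}) − β (a/c)^i (z_+^i − z_−^i)) for i ≥ 1. If a z_+ < c, then for every N ≥ 1: ∑_{i=0}^{N−1} |q_i| ≤ 1/c + (1+β) z_+ / (c (1 − a z_+/c)²). -/

import Mathlib

lemma my_pow_sub_pow_le (x y : ℝ) (hy : 0 ≤ y) (hxy : y ≤ x) :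
    ∀ m : ℕ, x ^ (m + 1) - y ^ (m + 1) ≤ ((m : ℝ) + 1) * (x - y) * x ^ m := by
  intro m
  induction m with
  | zero => simp
  | succ n ih =>
    have hx : 0 ≤ x := hy.trans hxy
    have h1 : y ^ (n + 1) ≤ x ^ (n + 1) := pow_le_pow_left₀ hy hxy _
    have h2 : 0 ≤ x ^ n := pow_nonneg hx n
    have h3 : x * (x ^ (n + 1) - y ^ (n + 1)) ≤ x * (((n : ℝ) + 1) * (x - y) * x ^ n) :=
      mul_le_mul_of_nonneg_left ih hx
    have h4 : (x - y) * y ^ (n + 1) ≤ (x - y) * x ^ (n + 1) :=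
      mul_le_mul_of_nonneg_left h1 (by linarith)
    have key : x ^ (n + 1 + 1) - y ^ (n + 1 + 1)
        = x * (x ^ (n + 1) - y ^ (n + 1)) + (x - y) * y ^ (n + 1) := by ring
    have e1 : x * (((n : ℝ) + 1) * (x - y) * x ^ n) = ((n : ℝ) + 1) * (x - y) * x ^ (n + 1) := by
      ring
    push_cast
    nlinarith [h3, h4]

/-- Bound on the absolute partial sums of the convolution-inverse sequence `q` arising
in the PID controller analysis: if `a z₊ < c` then `∑_{i=0}^{N−1} |q_i| ≤
1/c + (1+β) z₊ / (c (1 − a z₊/c)²)`. -/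
theorem pid_q_abs_partial_sum_bound (a c β : ℝ) (ha : 0 < a) (hc : 0 < c) (hβ : 0 ≤ β)
    (b zp zm : ℝ) (hzm0 : 0 ≤ zm) (hroots : zm < zp)
    (hsum : zp + zm = b / a) (hprod : zp * zm = c / a)
    (hlt : a * zp < c)
    (q : ℕ → ℝ) (hq0 : q 0 = 1 / c)
    (hqi : ∀ i, 1 ≤ i → q i = (1 / (a * (zp - zm))) *
      ((a / c) ^ (i + 1) * (zp ^ (i + 1) - zm ^ (i + 1))
        - β * (a / c) ^ i * (zp ^ i - zm ^ i))) :
    ∀ N, 1 ≤ N →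
      ∑ i ∈ Finset.range N, |q i| ≤
        1 / c + (1 + β) * zp / (c * (1 - a * zp / c) ^ 2) := by
  intro N hN
  obtain ⟨M, rfl⟩ : ∃ M, N = M + 1 := ⟨N - 1, by omega⟩
  set r := a * zp / c with hrdef
  have hzp0 : 0 < zp := lt_of_le_of_lt hzm0 hroots
  have hzmzp : 0 < zp * zm := by rw [hprod]; positivity
  have hzm0' : 0 < zm := by nlinarith
  have hcprod : a * (zp * zm) = c := by rw [hprod]; field_simp
  have hzm1 : 1 < zm := by nlinarith
  have hzp1 : 1 < zp := hzm1.trans hroots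
  have hr0 : 0 < r := by positivity
  have hr1 : r < 1 := (div_lt_one hc).mpr hlt
  have h1r : 0 < 1 - r := by linarith
  -- has sum for (n+1) r^n
  have hrn : ‖r‖ < 1 := by rw [Real.norm_eq_abs, abs_of_pos hr0]; exact hr1
  have h1 : HasSum (fun n : ℕ => (n : ℝ) * r ^ n) (r / (1 - r) ^ 2) :=
    hasSum_coe_mul_geometric_of_norm_lt_one hrn
  have h2 : HasSum (fun n : ℕ => r ^ n) (1 - r)⁻¹ := hasSum_geometric_of_norm_lt_one hrn
  have h3 : HasSum (fun n : ℕ => ((n : ℝ) + 1) * r ^ n) (1 / (1 - r) ^ 2) := by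
    have h := h1.add h2
    have e : (fun n : ℕ => (n : ℝ) * r ^ n + r ^ n) = fun n : ℕ => ((n : ℝ) + 1) * r ^ n := by
      funext n; ring
    have ev : r / (1 - r) ^ 2 + (1 - r)⁻¹ = 1 / (1 - r) ^ 2 := by
      field_simp
      ring
    rwa [e, ev] at h
  have hsum1 : ∀ K : ℕ, ∑ i ∈ Finset.range K, ((i : ℝ) + 1) * r ^ i ≤ 1 / (1 - r) ^ 2 := by
    intro K
    refine sum_le_hasSum _ (fun i _ => by positivity) h3
  have hsum2 : ∑ i ∈ Finset.range M, ((i : ℝ) + 2) * r ^ (i + 1) ≤ 1 / (1 - r) ^ 2 := by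
    have h := hsum1 (M + 1)
    rw [Finset.sum_range_succ'] at h
    have e : ∀ i : ℕ, (((i + 1 : ℕ) : ℝ) + 1) * r ^ (i + 1) = ((i : ℝ) + 2) * r ^ (i + 1) := by
      intro i; push_cast; ring
    simp only [e] at h
    simp only [Nat.cast_zero, zero_add, pow_zero, mul_one] at h
    linarith
  -- per-term bound
  have hterm : ∀ i : ℕ, |q (i + 1)| ≤
      1 / c * (((i : ℝ) + 2) * r ^ (i + 1) + β * (((i : ℝ) + 1) * r ^ i)) := by
    intro i
    rw [hqi (i + 1) (by omega)]
    have hac : 0 < a / c := by positivity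
    have hD : 0 < 1 / (a * (zp - zm)) := by
      have : 0 < zp - zm := by linarith
      positivity
    set A := (a / c) ^ (i + 1 + 1) * (zp ^ (i + 1 + 1) - zm ^ (i + 1 + 1)) with hA
    set B := β * (a / c) ^ (i + 1) * (zp ^ (i + 1) - zm ^ (i + 1)) with hB
    have hA0 : 0 ≤ A := by
      have := pow_le_pow_left₀ hzm0 hroots.le (i + 1 + 1)
      have h' : (0:ℝ) ≤ (a / c) ^ (i + 1 + 1) := by positivity
      apply mul_nonneg h' (by linarith)
    have hB0 : 0 ≤ B := by
      have := pow_le_pow_left₀ hzm0 hroots.le (i + 1)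
      have h' : (0:ℝ) ≤ β * (a / c) ^ (i + 1) := by positivity
      apply mul_nonneg h' (by linarith)
    have habs : |A - B| ≤ A + B := by
      rw [abs_le]; constructor <;> linarith
    have hDA : 1 / (a * (zp - zm)) * A ≤ 1 / c * (((i : ℝ) + 2) * r ^ (i + 1)) := by
      have hb := my_pow_sub_pow_le zp zm hzm0 hroots.le (i + 1)
      have hb' : zp ^ (i + 1 + 1) - zm ^ (i + 1 + 1) ≤ ((i : ℝ) + 2) * (zp - zm) * zp ^ (i + 1) := by
        push_cast at hb ⊢; linarith
      have h' : A ≤ (a / c) ^ (i + 1 + 1) * (((i : ℝ) + 2) * (zp - zm) * zp ^ (i + 1)) :=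
        mul_le_mul_of_nonneg_left hb' (by positivity)
      have heq : 1 / (a * (zp - zm)) * ((a / c) ^ (i + 1 + 1) * (((i : ℝ) + 2) * (zp - zm) * zp ^ (i + 1)))
          = 1 / c * (((i : ℝ) + 2) * r ^ (i + 1)) := by
        rw [hrdef]
        have hzpzm : zp - zm ≠ 0 := by linarith
        field_simp
        ring_nf
        field_simp
      calc 1 / (a * (zp - zm)) * A
          ≤ 1 / (a * (zp - zm)) * ((a / c) ^ (i + 1 + 1) * (((i : ℝ) + 2) * (zp - zm) * zp ^ (i + 1))) :=
            mul_le_mul_of_nonneg_left h' hD.le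
        _ = 1 / c * (((i : ℝ) + 2) * r ^ (i + 1)) := heq
    have hDB : 1 / (a * (zp - zm)) * B ≤ 1 / c * (β * (((i : ℝ) + 1) * r ^ i)) := by
      have hb := my_pow_sub_pow_le zp zm hzm0 hroots.le i
      have h' : B ≤ β * (a / c) ^ (i + 1) * (((i : ℝ) + 1) * (zp - zm) * zp ^ i) :=
        mul_le_mul_of_nonneg_left hb (by positivity)
      have heq : 1 / (a * (zp - zm)) * (β * (a / c) ^ (i + 1) * (((i : ℝ) + 1) * (zp - zm) * zp ^ i))
          = 1 / c * (β * (((i : ℝ) + 1) * r ^ i)) := by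
        rw [hrdef]
        have hzpzm : zp - zm ≠ 0 := by linarith
        field_simp
        ring_nf
        field_simp
      calc 1 / (a * (zp - zm)) * B
          ≤ 1 / (a * (zp - zm)) * (β * (a / c) ^ (i + 1) * (((i : ℝ) + 1) * (zp - zm) * zp ^ i)) :=
            mul_le_mul_of_nonneg_left h' hD.le
        _ = 1 / c * (β * (((i : ℝ) + 1) * r ^ i)) := heq
    calc |1 / (a * (zp - zm)) * (A - B)|
        = 1 / (a * (zp - zm)) * |A - B| := by
          rw [abs_mul, abs_of_pos hD]
      _ ≤ 1 / (a * (zp - zm)) * (A + B) := mul_le_mul_of_nonneg_left habs hD.le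
      _ = 1 / (a * (zp - zm)) * A + 1 / (a * (zp - zm)) * B := by ring
      _ ≤ 1 / c * (((i : ℝ) + 2) * r ^ (i + 1)) + 1 / c * (β * (((i : ℝ) + 1) * r ^ i)) := by
          linarith
      _ = 1 / c * (((i : ℝ) + 2) * r ^ (i + 1) + β * (((i : ℝ) + 1) * r ^ i)) := by ring
  -- assemble
  rw [Finset.sum_range_succ', hq0, abs_of_pos (by positivity : (0:ℝ) < 1 / c)]
  have hS : ∑ i ∈ Finset.range M, |q (i + 1)| ≤ (1 + β) * zp / (c * (1 - r) ^ 2) := by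
    calc ∑ i ∈ Finset.range M, |q (i + 1)|
        ≤ ∑ i ∈ Finset.range M, 1 / c * (((i : ℝ) + 2) * r ^ (i + 1) + β * (((i : ℝ) + 1) * r ^ i)) :=
          Finset.sum_le_sum fun i _ => hterm i
      _ = 1 / c * ((∑ i ∈ Finset.range M, ((i : ℝ) + 2) * r ^ (i + 1))
            + β * ∑ i ∈ Finset.range M, ((i : ℝ) + 1) * r ^ i) := by
          rw [← Finset.mul_sum]
          congr 1
          rw [Finset.sum_add_distrib, Finset.mul_sum]
      _ ≤ 1 / c * (1 / (1 - r) ^ 2 + β * (1 / (1 - r) ^ 2)) := by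
          have := hsum1 M
          have hβs : β * ∑ i ∈ Finset.range M, ((i : ℝ) + 1) * r ^ i ≤ β * (1 / (1 - r) ^ 2) :=
            mul_le_mul_of_nonneg_left this hβ
          have h1c : (0:ℝ) ≤ 1 / c := by positivity
          apply mul_le_mul_of_nonneg_left _ h1c
          linarith
      _ = (1 + β) / (c * (1 - r) ^ 2) := by
          field_simp
      _ ≤ (1 + β) * zp / (c * (1 - r) ^ 2) := by
          gcongr
          nlinarith
  linarith
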